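/- Let p₁,…,p_m be finitely many points in ℝ^n (m ≥ 1). A point x belongs to the relative interior of the convex hull of {p₁,…,p_m} if and only if there exist strictly positive coefficients λ₁,…,λ_m with ∑_{i=1}^m λ_i = 1 and x = ∑_{i=1}^m λ_i p_i. -/

import Mathlib

set_option maxHeartbeats 1000000

open Set Finset

private lemma mem_convexHull_range_iff {n m : ℕ} (p : Fin m → (Fin n → ℝ)) (x : Fin n → ℝ) :
    x ∈ convexHull ℝ (Set.range p) ↔
      ∃ w : Fin m → ℝ, (∀ i, 0 ≤ w i) ∧ ∑ i, w i = 1 ∧ ∑ i, w i • p i = x := by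
  classical
  constructor
  · intro hx
    rw [convexHull_range_eq_exists_affineCombination] at hx
    obtain ⟨s, w, hw0, hw1, hx⟩ := hx
    refine ⟨fun i => if i ∈ s then w i else 0, fun i => ?_, ?_, ?_⟩
    · dsimp only; split
      · exact hw0 _ ‹_›
      · exact le_rfl
    · dsimp only
      rw [Finset.sum_ite_mem, Finset.univ_inter, hw1]
    · dsimp only
      rw [← hx, affineCombination_eq_centerMass hw1, Finset.centerMass_eq_of_sum_1 _ _ hw1]
      simp_rw [ite_smul, zero_smul]
      rw [Finset.sum_ite_mem, Finset.univ_inter]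
  · rintro ⟨w, hw0, hw1, rfl⟩
    have := Finset.centerMass_mem_convexHull (Finset.univ : Finset (Fin m))
      (fun i _ => hw0 i) (by rw [hw1]; norm_num)
      (fun i _ => Set.mem_range_self (f := p) i)
    rwa [Finset.centerMass_eq_of_sum_1 _ _ hw1] at this

private lemma mem_intrinsicInterior_iff' {n : ℕ} {s : Set (Fin n → ℝ)} {x : Fin n → ℝ} :
    x ∈ intrinsicInterior ℝ s ↔
      x ∈ affineSpan ℝ s ∧ ∃ U : Set (Fin n → ℝ), IsOpen U ∧ x ∈ U ∧
        U ∩ (affineSpan ℝ s : Set (Fin n → ℝ)) ⊆ s := by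
  constructor
  · intro hx
    obtain ⟨x', hx', rfl⟩ := (mem_intrinsicInterior).1 hx
    refine ⟨x'.2, ?_⟩
    rw [mem_interior] at hx'
    obtain ⟨V, hVs, hVopen, hxV⟩ := hx'
    rw [isOpen_induced_iff] at hVopen
    obtain ⟨U, hU, rfl⟩ := hVopen
    refine ⟨U, hU, hxV, ?_⟩
    rintro y ⟨hyU, hyA⟩
    exact hVs (show (⟨y, hyA⟩ : affineSpan ℝ s) ∈ _ from hyU)
  · rintro ⟨hxA, U, hU, hxU, hUs⟩
    exact (mem_intrinsicInterior).2 ⟨⟨x, hxA⟩, mem_interior.2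
      ⟨Subtype.val ⁻¹' U, fun y hy => hUs ⟨hy, y.2⟩, hU.preimage continuous_subtype_val, hxU⟩, rfl⟩

/-- A point lies in the relative interior of the convex hull of finitely many points
`p₁,…,p_m` iff it is a convex combination of all of them with strictly positive
coefficients. -/
theorem mem_intrinsicInterior_convexHull_iff_pos_combination
    (n m : ℕ) (hn : 1 ≤ n) (hm : 1 ≤ m)
    (p : Fin m → (Fin n → ℝ)) (x : Fin n → ℝ) :
    x ∈ intrinsicInterior ℝ (convexHull ℝ (Set.range p)) ↔
      ∃ lam : Fin m → ℝ, (∀ i, 0 < lam i) ∧ ∑ i, lam i = 1 ∧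
        x = ∑ i, lam i • p i := by
  constructor
  · intro hx
    classical
    have i0 : Fin m := ⟨0, hm⟩
    haveI : Nonempty (Fin m) := ⟨i0⟩
    set C := convexHull ℝ (Set.range p) with hC
    have hm0 : (0:ℝ) < m := by exact_mod_cast hm
    set c : Fin n → ℝ := ∑ i, (m:ℝ)⁻¹ • p i with hcdef
    have hcC : c ∈ C := (mem_convexHull_range_iff p c).2
      ⟨fun _ => (m:ℝ)⁻¹, fun i => by positivity, by
        rw [Finset.sum_const, Finset.card_univ, Fintype.card_fin, nsmul_eq_mul,
          mul_inv_cancel₀ hm0.ne'], rfl⟩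
    rw [mem_intrinsicInterior_iff'] at hx
    obtain ⟨hxA, U, hU, hxU, hUs⟩ := hx
    -- find δ > 0 with x + δ • (x - c) ∈ U
    have hcont : Continuous (fun δ : ℝ => δ • (x - c) + x) := by continuity
    have hWopen : IsOpen ((fun δ : ℝ => δ • (x - c) + x) ⁻¹' U) := hU.preimage hcont
    have h0W : (0:ℝ) ∈ (fun δ : ℝ => δ • (x - c) + x) ⁻¹' U := by
      simp [Set.mem_preimage, hxU]
    obtain ⟨ε, hε, hball⟩ := Metric.isOpen_iff.1 hWopen 0 h0W
    set δ := ε / 2 with hδdef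
    have hδ : 0 < δ := by positivity
    have hyU : δ • (x - c) + x ∈ U := by
      apply hball
      rw [Metric.mem_ball, Real.dist_eq, sub_zero, abs_of_pos hδ]
      linarith
    set y := δ • (x - c) + x with hydef
    have hcA : c ∈ affineSpan ℝ C := subset_affineSpan ℝ C hcC
    have hyA : y ∈ affineSpan ℝ C := by
      have h2 := AffineSubspace.smul_vsub_vadd_mem (affineSpan ℝ C) δ hxA hcA hxA
      have : y = δ • (x -ᵥ c) +ᵥ x := by
        rw [hydef, vsub_eq_sub, vadd_eq_add, add_comm]
      rw [this]; exact h2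
    have hyC : y ∈ C := hUs ⟨hyU, hyA⟩
    obtain ⟨ν, hν0, hν1, hνy⟩ := (mem_convexHull_range_iff p y).1 hyC
    have h1δ : (0:ℝ) < 1 + δ := by linarith
    refine ⟨fun i => (ν i + δ / m) / (1 + δ),
      fun i => div_pos (by have := hν0 i; positivity) h1δ, ?_, ?_⟩
    · rw [← Finset.sum_div, Finset.sum_add_distrib, hν1, Finset.sum_const, Finset.card_univ,
        Fintype.card_fin, nsmul_eq_mul]
      field_simp
    · symm
      have e1 : ∀ i, ((ν i + δ / (m:ℝ)) / (1 + δ)) • p i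
          = (1+δ)⁻¹ • ((ν i) • p i + (δ * (m:ℝ)⁻¹) • p i) := by
        intro i
        rw [div_eq_inv_mul, mul_smul, ← add_smul, div_eq_mul_inv]
      have e2 : ∑ i, ((ν i + δ / (m:ℝ)) / (1 + δ)) • p i
          = (1+δ)⁻¹ • (y + δ • c) := by
        simp_rw [e1]
        rw [← Finset.smul_sum, Finset.sum_add_distrib, hνy, hcdef, Finset.smul_sum]
        simp_rw [mul_smul]
      have hy2 : y + δ • c = (1+δ) • x := by
        rw [hydef, smul_sub, add_smul, one_smul]; abel
      simp only []
      rw [e2, hy2, smul_smul, inv_mul_cancel₀ h1δ.ne', one_smul]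
  · rintro ⟨lam, hlam0, hlam1, rfl⟩
    classical
    have i0 : Fin m := ⟨0, hm⟩
    haveI : Nonempty (Fin m) := ⟨i0⟩
    set C := convexHull ℝ (Set.range p) with hC
    set x : Fin n → ℝ := ∑ i, lam i • p i with hxdef
    have hxC : x ∈ C := (mem_convexHull_range_iff p x).2
      ⟨lam, fun i => (hlam0 i).le, hlam1, rfl⟩
    have hxA : x ∈ affineSpan ℝ C := subset_affineSpan ℝ C hxC
    have hxA' : x ∈ affineSpan ℝ (Set.range p) := by
      rwa [hC, affineSpan_convexHull] at hxA
    -- linear map T and its right inverse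
    set T : (Fin m → ℝ) →ₗ[ℝ] (Fin n → ℝ) :=
      Fintype.linearCombination ℝ (fun i => p i - p i0) with hTdef
    have hTapp : ∀ w : Fin m → ℝ, T w = ∑ i, w i • (p i - p i0) := fun w => rfl
    have hdir : vectorSpan ℝ (Set.range p) = LinearMap.range T := by
      rw [hTdef, Fintype.range_linearCombination,
        vectorSpan_range_eq_span_range_vsub_right ℝ p i0]
      rfl
    obtain ⟨σ, hσ⟩ := T.rangeRestrict.exists_rightInverse_of_surjective
      (LinearMap.range_eq_top.2 T.surjective_rangeRestrict)
    have hσinv : ∀ v : LinearMap.range T, T (σ v) = (v : Fin n → ℝ) := by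
      intro v
      have := congrFun (congrArg (fun f => f.toFun) hσ) v
      simpa [LinearMap.rangeRestrict] using congrArg Subtype.val this
    obtain ⟨K, hK, hLbound⟩ : ∃ K : ℝ, 0 < K ∧
        ∀ v : LinearMap.range T, ‖σ v‖ ≤ K * ‖(v : Fin n → ℝ)‖ := by
      set L := LinearMap.toContinuousLinearMap σ with hLdef
      refine ⟨‖L‖ + 1, by positivity, fun v => ?_⟩
      calc ‖σ v‖ = ‖L v‖ := rfl
        _ ≤ ‖L‖ * ‖v‖ := L.le_opNorm v
        _ ≤ (‖L‖ + 1) * ‖v‖ := by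
            apply mul_le_mul_of_nonneg_right _ (norm_nonneg _)
            linarith
    -- min of lam
    set a : ℝ := Finset.univ.inf' Finset.univ_nonempty lam with hadef
    have ha : 0 < a := (Finset.lt_inf'_iff _).2 fun i _ => hlam0 i
    have hale : ∀ i, a ≤ lam i := fun i => Finset.inf'_le lam (Finset.mem_univ i)
    set D : ℝ := ((m:ℝ) + 1) * K + 1 with hDdef
    have hD : 0 < D := by positivity
    set ε : ℝ := a / D with hεdef
    have hε : 0 < ε := div_pos ha hD
    rw [mem_intrinsicInterior_iff']
    refine ⟨hxA, Metric.ball x ε, Metric.isOpen_ball, Metric.mem_ball_self hε, ?_⟩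
    rintro y ⟨hyB, hyA⟩
    have hyA' : y ∈ affineSpan ℝ (Set.range p) := by
      rwa [hC, affineSpan_convexHull] at hyA
    have hv : y - x ∈ LinearMap.range T := by
      rw [← hdir, ← direction_affineSpan]
      exact AffineSubspace.vsub_mem_direction hyA' hxA'
    set v : LinearMap.range T := ⟨y - x, hv⟩ with hvdef
    have hvnorm : ‖(v : Fin n → ℝ)‖ < ε := by
      rw [hvdef]
      simpa [dist_eq_norm] using hyB
    set cc : Fin m → ℝ := σ v with hccdef
    have hTcc : ∑ i, cc i • (p i - p i0) = y - x := by
      rw [← hTapp, hccdef, hσinv]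
    have hcbound : ∀ i, |cc i| ≤ K * ε := by
      intro i
      calc |cc i| ≤ ‖cc‖ := by
            simpa [Real.norm_eq_abs] using norm_le_pi_norm cc i
        _ ≤ K * ‖(v : Fin n → ℝ)‖ := hLbound v
        _ ≤ K * ε := mul_le_mul_of_nonneg_left hvnorm.le hK.le
    have hsbound : |∑ j, cc j| ≤ (m:ℝ) * (K * ε) := by
      calc |∑ j, cc j| ≤ ∑ j, |cc j| := Finset.abs_sum_le_sum_abs _ _
        _ ≤ ∑ _j : Fin m, K * ε := Finset.sum_le_sum fun j _ => hcbound j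
        _ = (m:ℝ) * (K * ε) := by
            rw [Finset.sum_const, Finset.card_univ, Fintype.card_fin, nsmul_eq_mul]
    have hkey : ((m:ℝ) + 1) * (K * ε) < a := by
      rw [hεdef]
      rw [div_eq_mul_inv, ← mul_assoc]
      calc ((m:ℝ)+1) * K * (a * D⁻¹) = (((m:ℝ)+1) * K) * a * D⁻¹ := by ring
        _ < D * a * D⁻¹ := by
            apply mul_lt_mul_of_pos_right _ (by positivity)
            apply mul_lt_mul_of_pos_right _ ha
            rw [hDdef]; linarith
        _ = a := by field_simp
    set μ : Fin m → ℝ := fun i => lam i + cc i - (if i = i0 then ∑ j, cc j else 0) with hμdef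
    have hμ0 : ∀ i, 0 ≤ μ i := by
      intro i
      have h1 := hcbound i
      have h2 := hsbound
      have h3 := hale i
      rw [hμdef]
      dsimp only
      have habs1 : -(K*ε) ≤ cc i := by cases abs_le.1 h1; linarith
      split
      · have habs2 : ∑ j, cc j ≤ (m:ℝ) * (K * ε) := by
          cases abs_le.1 h2; linarith
        nlinarith
      · nlinarith
    have hμ1 : ∑ i, μ i = 1 := by
      rw [hμdef]
      rw [Finset.sum_sub_distrib, Finset.sum_add_distrib, hlam1, Finset.sum_ite_eq' Finset.univ i0]
      simp
    have hμp : ∑ i, μ i • p i = y := by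
      rw [hμdef]
      simp_rw [sub_smul, add_smul, ite_smul, zero_smul]
      rw [Finset.sum_sub_distrib, Finset.sum_add_distrib,
        Finset.sum_ite_eq' Finset.univ i0 (fun x => (∑ j, cc j) • p x), if_pos (Finset.mem_univ i0)]
      have : ∑ i, cc i • p i - (∑ j, cc j) • p i0 = y - x := by
        rw [← hTcc]
        simp_rw [smul_sub]
        rw [Finset.sum_sub_distrib, ← Finset.sum_smul]
      rw [← hxdef]
      rw [add_sub_assoc, this]
      abel
    exact (mem_convexHull_range_iff p y).2 ⟨μ, hμ0, hμ1, hμp⟩
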